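/- arXiv:math/0612320 — 2 statements merged into one kernel-verified Lean document; each statement's English description precedes it below -/
import Mathlib

section
/- Let Q be a nondegenerate quadratic form on V and let X* = (X^{≥a})_{a∈ℤ} be a Q-filtration of V. Then there exists a direct sum decomposition V = ⊕_{a∈ℤ} X^a such that X^{≥a} = ⊕_{a' ≥ a} X^{a'} for all a, ⟨X^a, X^{a'}⟩ = 0 whenever a + a' ≠ 0, and Q|_{X^a} = 0 for every a ≠ 0. -/
open QuadraticMap

variable {k V : Type*}

/-- The perpendicular of a set `S ⊆ V` with respect to the bilinear form
`⟨x,y⟩ = Q(x+y) - Q x - Q y` associated to a quadratic form `Q`. -/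
def perp [Field k] [AddCommGroup V] [Module k V] (Q : QuadraticForm k V) (S : Set V) :
    Submodule k V where
  carrier := {x | ∀ y ∈ S, polar Q x y = 0}
  add_mem' := by
    intro a b ha hb y hy
    rw [polar_add_left, ha y hy, hb y hy, add_zero]
  zero_mem' := by
    intro y hy
    simp [polar]
  smul_mem' := by
    intro c a ha y hy
    rw [polar_smul_left, ha y hy, smul_zero]

/-- The radical `R = {x ∈ V : ⟨x, V⟩ = 0}` of the bilinear form associated to `Q`. -/
def rad [Field k] [AddCommGroup V] [Module k V] (Q : QuadraticForm k V) : Submodule k V :=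
  perp Q Set.univ

/-- `Q` is nondegenerate: its restriction to the radical of the associated bilinear
form is injective. -/
def QNondeg [Field k] [AddCommGroup V] [Module k V] (Q : QuadraticForm k V) : Prop :=
  Set.InjOn Q (rad Q : Set V)

/-- `𝓜̃_Q`: the set of nilpotent endomorphisms `N` with `Q(Nx) = -⟨x, Nx⟩` for all `x`
(equivalently, `1 + N` is a unipotent element of the orthogonal group `O_Q`). -/
def Mtilde [Field k] [AddCommGroup V] [Module k V] (Q : QuadraticForm k V) :
    Set (Module.End k V) :=
  {N | IsNilpotent N ∧ ∀ x, Q (N x) = - polar Q x (N x)}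

/-- A `Q`-filtration of `V`: a decreasing family of subspaces, equal to `V` for small
indices and to `0` for large indices, such that for every `a ≥ 1` the form `Q` vanishes
on `X^{≥a}` and `X^{≥1-a} = (X^{≥a})^⊥`. -/
def IsQFiltration [Field k] [AddCommGroup V] [Module k V] (Q : QuadraticForm k V)
    (X : ℤ → Submodule k V) : Prop :=
  (∀ a : ℤ, X (a + 1) ≤ X a) ∧ (∃ a : ℤ, X a = ⊤) ∧ (∃ a : ℤ, X a = ⊥) ∧
    ∀ a : ℤ, 1 ≤ a → (∀ x ∈ X a, Q x = 0) ∧ X (1 - a) = perp Q (X a : Set V)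

section Helpers

variable [Field k] [AddCommGroup V] [Module k V] (Q : QuadraticForm k V)

lemma mem_perp {S : Set V} {x : V} : x ∈ perp Q S ↔ ∀ y ∈ S, polar Q x y = 0 := Iff.rfl

lemma perp_bot : perp Q ((⊥ : Submodule k V) : Set V) = ⊤ := by
  ext x
  simp only [Submodule.mem_top, iff_true, mem_perp]
  rintro y hy
  rw [SetLike.mem_coe, Submodule.mem_bot] at hy
  simp [hy, polar_zero_right]

lemma mem_rad {x : V} : x ∈ rad Q ↔ ∀ y : V, polar Q x y = 0 := by
  simp [rad, mem_perp]

lemma Q_add (x y : V) : Q (x + y) = Q x + Q y + polar Q x y := by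
  rw [polar]; ring

/-- polar vanishes pairwise on the span of a family on which it vanishes pairwise. -/
lemma polar_span_zero {ι : Type*} (v : ι → V) (h : ∀ i j, polar Q (v i) (v j) = 0) :
    ∀ x ∈ Submodule.span k (Set.range v), ∀ y ∈ Submodule.span k (Set.range v),
      polar Q x y = 0 := by
  have step1 : ∀ i, ∀ y ∈ Submodule.span k (Set.range v), polar Q (v i) y = 0 := by
    intro i y hy
    have : Submodule.span k (Set.range v) ≤ LinearMap.ker (Q.polarBilin (v i)) := by
      rw [Submodule.span_le]
      rintro _ ⟨j, rfl⟩
      simp only [SetLike.mem_coe, LinearMap.mem_ker, polarBilin_apply_apply]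
      exact h i j
    simpa using this hy
  intro x hx y hy
  have : Submodule.span k (Set.range v) ≤ LinearMap.ker ((Q.polarBilin.flip) y) := by
    rw [Submodule.span_le]
    rintro _ ⟨j, rfl⟩
    simp only [SetLike.mem_coe, LinearMap.mem_ker, LinearMap.flip_apply, polarBilin_apply_apply]
    exact step1 j y hy
  simpa using this hx

lemma Q_span_zero {ι : Type*} (v : ι → V) (h0 : ∀ i, Q (v i) = 0)
    (h : ∀ i j, polar Q (v i) (v j) = 0) :
    ∀ x ∈ Submodule.span k (Set.range v), Q x = 0 := by
  intro x hx
  induction hx using Submodule.span_induction with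
  | mem x hx => obtain ⟨i, rfl⟩ := hx; exact h0 i
  | zero => simp
  | add x y hx hy px py =>
    rw [Q_add, px, py, polar_span_zero Q v h x hx y hy]; ring
  | smul a x hx px => rw [QuadraticMap.map_smul, px]; simp

lemma polar_comp' {W : Type*} [AddCommGroup W] [Module k W] (f : W →ₗ[k] V) (x y : W) :
    polar (Q.comp f) x y = polar Q (f x) (f y) := by
  simp [polar, QuadraticMap.comp_apply, map_add]

end Helpers

section Hyperbolic

variable [Field k] [AddCommGroup V] [Module k V] [FiniteDimensional k V]

lemma polar_sum_left (Q : QuadraticForm k V) {ι : Type*} (s : Finset ι) (f : ι → V) (y : V) :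
    polar Q (∑ i ∈ s, f i) y = ∑ i ∈ s, polar Q (f i) y := by
  have h := map_sum (Q.polarBilin.flip y) f s
  simp only [LinearMap.flip_apply, polarBilin_apply_apply] at h
  exact h

lemma polar_sum_right (Q : QuadraticForm k V) {ι : Type*} (s : Finset ι) (f : ι → V) (x : V) :
    polar Q x (∑ i ∈ s, f i) = ∑ i ∈ s, polar Q x (f i) := by
  have h := map_sum (Q.polarBilin x) f s
  simp only [polarBilin_apply_apply] at h
  exact h

lemma hyperbolic (Q : QuadraticForm k V) (hQ : QNondeg Q) (W : Submodule k V)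
    (hW : ∀ x ∈ W, Q x = 0) :
    ∃ (W' U : Submodule k V) (piW piW' : V →ₗ[k] V),
      (∀ x ∈ W', Q x = 0) ∧
      (∀ x ∈ W', ∀ y ∈ W', polar Q x y = 0) ∧
      U = perp Q (W : Set V) ⊓ perp Q (W' : Set V) ∧
      (∀ x, piW x ∈ W) ∧ (∀ x, piW' x ∈ W') ∧
      (∀ x ∈ W, piW x = x) ∧ (∀ x ∈ W', piW' x = x) ∧
      (∀ x ∈ perp Q (W' : Set V), piW x = 0) ∧
      (∀ x ∈ perp Q (W : Set V), piW' x = 0) ∧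
      (∀ x, x - piW x - piW' x ∈ U) := by
  classical
  have hWpolar : ∀ x ∈ W, ∀ y ∈ W, polar Q x y = 0 := by
    intro x hx y hy
    rw [polar, hW _ (add_mem hx hy), hW x hx, hW y hy]; ring
  set r := Module.finrank k W with hr
  let b : Module.Basis (Fin r) k W := Module.finBasis k W
  set e : Fin r → V := fun i => (b i : V) with he
  have he_mem : ∀ i, e i ∈ W := fun i => (b i).2
  have he_span : Submodule.span k (Set.range e) = W := by
    have h1 : Set.range e = W.subtype '' Set.range ⇑b := by
      rw [← Set.range_comp]; rfl
    rw [h1, ← Submodule.map_span, Module.Basis.span_eq, Submodule.map_subtype_top]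
  have he_li : LinearIndependent k e :=
    b.linearIndependent.map' W.subtype (Submodule.ker_subtype W)
  set T : V →ₗ[k] (Fin r → k) := LinearMap.pi fun i => Q.polarBilin (e i) with hT
  have hTapp : ∀ v i, T v i = polar Q (e i) v := by
    intro v i; simp [hT, LinearMap.pi_apply, polarBilin_apply_apply]
  have hTsurj : Function.Surjective T := by
    by_contra hsurj
    have hlt : LinearMap.range T < ⊤ :=
      lt_of_le_of_ne le_top (by rwa [Ne, LinearMap.range_eq_top])
    obtain ⟨φ, hφ0, hφ⟩ := Submodule.exists_dual_map_eq_bot_of_lt_top hlt inferInstance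
    have hφT : ∀ v, φ (T v) = 0 := by
      intro v
      have hm : φ (T v) ∈ Submodule.map φ (LinearMap.range T) :=
        Submodule.mem_map_of_mem (LinearMap.mem_range_self T v)
      rw [hφ] at hm; exact (Submodule.mem_bot k).mp hm
    set c : Fin r → k := fun i => φ (Pi.single i 1) with hc
    have hφx : ∀ x : Fin r → k, φ x = ∑ i, x i * c i := by
      intro x
      conv_lhs => rw [← Finset.univ_sum_single x, map_sum]
      refine Finset.sum_congr rfl fun i _ => ?_
      have h : Pi.single i (x i) = x i • (Pi.single i (1 : k) : Fin r → k) := by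
        rw [← Pi.single_smul, smul_eq_mul, mul_one]
      rw [h, LinearMap.map_smul, smul_eq_mul]
    have hw0rad : (∑ i, c i • e i) ∈ rad Q := by
      rw [mem_rad]
      intro y
      rw [polar_sum_left]
      have heq := hφT y
      rw [hφx] at heq
      rw [← heq]
      refine Finset.sum_congr rfl fun i _ => ?_
      rw [polar_smul_left, smul_eq_mul, hTapp, mul_comm]
    have hw0W : (∑ i, c i • e i) ∈ W :=
      Submodule.sum_mem _ fun i _ => Submodule.smul_mem _ _ (he_mem i)
    have hw0 : (∑ i, c i • e i) = 0 := by
      refine hQ hw0rad (Submodule.zero_mem _) ?_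
      rw [hW _ hw0W, map_zero]
    have hczero : ∀ i, c i = 0 := by
      intro i
      exact linearIndependent_iff'.mp he_li Finset.univ c hw0 i (Finset.mem_univ i)
    apply hφ0
    apply LinearMap.ext
    intro x
    rw [hφx]
    simp [hczero]
  choose f hf using fun j => hTsurj (Pi.single j 1)
  have hef : ∀ i j, polar Q (e i) (f j) = if i = j then 1 else 0 := by
    intro i j
    have := congrFun (hf j) i
    rw [hTapp] at this
    rw [this, Pi.single_apply]
  set vv : Fin r → V := fun j =>
    (∑ i ∈ Finset.univ.filter (· < j), polar Q (f i) (f j) • e i) + Q (f j) • e j with hvv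
  have hvv_mem : ∀ j, vv j ∈ W := by
    intro j
    exact add_mem (Submodule.sum_mem _ fun i _ => Submodule.smul_mem _ _ (he_mem i))
      (Submodule.smul_mem _ _ (he_mem j))
  set g : Fin r → V := fun j => f j - vv j with hg
  have heg : ∀ i j, polar Q (e i) (g j) = if i = j then 1 else 0 := by
    intro i j
    rw [hg]
    simp only
    rw [polar_sub_right, hWpolar _ (he_mem i) _ (hvv_mem j), sub_zero, hef]
  have hfvv : ∀ i j, polar Q (f i) (vv j) =
      (if i ∈ Finset.univ.filter (· < j) then polar Q (f i) (f j) else 0)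
        + (if j = i then Q (f j) else 0) := by
    intro i j
    rw [hvv]
    simp only
    rw [polar_add_right, polar_sum_right, polar_smul_right]
    congr 1
    · rw [Finset.sum_congr rfl (fun l _ => by
        rw [polar_smul_right, smul_eq_mul, polar_comm (⇑Q) (f i) (e l), hef, mul_ite, mul_one,
          mul_zero])]
      exact Finset.sum_ite_eq' _ i _
    · rw [polar_comm (⇑Q) (f i) (e j), hef, smul_eq_mul, mul_ite, mul_one, mul_zero]
  have hQg : ∀ j, Q (g j) = 0 := by
    intro j
    rw [hg]
    simp only
    rw [sub_eq_add_neg, Q_add, QuadraticMap.map_neg, hW _ (hvv_mem j), polar_neg_right,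
      hfvv]
    simp
  have hgg : ∀ i j, polar Q (g i) (g j) = 0 := by
    have key : ∀ i j : Fin r, i < j → polar Q (g i) (g j) = 0 := by
      intro i j hij
      rw [hg]
      simp only
      rw [polar_sub_left, polar_sub_right, polar_sub_right]
      rw [hWpolar _ (hvv_mem i) _ (hvv_mem j)]
      have h1 : polar Q (vv i) (f j) = 0 := by
        rw [polar_comm, hfvv]
        rw [if_neg (by simp [Finset.mem_filter]; omega), if_neg (by omega)]
        simp
      rw [h1, hfvv, if_pos (by simp [Finset.mem_filter, hij]), if_neg (by omega)]
      ring
    intro i j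
    rcases lt_trichotomy i j with h | h | h
    · exact key i j h
    · subst h
      rw [polar_self, hQg]
      simp
    · rw [polar_comm]
      exact key j i h
  set W' : Submodule k V := Submodule.span k (Set.range g) with hW'
  have hg_mem : ∀ j, g j ∈ W' := fun j => Submodule.subset_span (Set.mem_range_self j)
  have hW'Q : ∀ x ∈ W', Q x = 0 := Q_span_zero Q g hQg hgg
  have hW'polar : ∀ x ∈ W', ∀ y ∈ W', polar Q x y = 0 := polar_span_zero Q g hgg
  set piW : V →ₗ[k] V :=
    ∑ j : Fin r, (LinearMap.toSpanSingleton k V (e j)).comp (Q.polarBilin (g j)) with hpiW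
  set piW' : V →ₗ[k] V :=
    ∑ i : Fin r, (LinearMap.toSpanSingleton k V (g i)).comp (Q.polarBilin (e i)) with hpiW'
  have hpiW_apply : ∀ x, piW x = ∑ j, polar Q (g j) x • e j := by
    intro x
    rw [hpiW, LinearMap.sum_apply]
    exact Finset.sum_congr rfl fun j _ => by
      rw [LinearMap.comp_apply, LinearMap.toSpanSingleton_apply, polarBilin_apply_apply]
  have hpiW'_apply : ∀ x, piW' x = ∑ i, polar Q (e i) x • g i := by
    intro x
    rw [hpiW', LinearMap.sum_apply]
    exact Finset.sum_congr rfl fun i _ => by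
      rw [LinearMap.comp_apply, LinearMap.toSpanSingleton_apply, polarBilin_apply_apply]
  have hpiWmem : ∀ x, piW x ∈ W := by
    intro x
    rw [hpiW_apply]
    exact Submodule.sum_mem _ fun j _ => Submodule.smul_mem _ _ (he_mem j)
  have hpiW'mem : ∀ x, piW' x ∈ W' := by
    intro x
    rw [hpiW'_apply]
    exact Submodule.sum_mem _ fun i _ => Submodule.smul_mem _ _ (hg_mem i)
  have hpiW_e : ∀ i, piW (e i) = e i := by
    intro i
    rw [hpiW_apply]
    rw [Finset.sum_congr rfl (fun j _ => by
      rw [polar_comm (⇑Q) (g j) (e i), heg, ite_smul, one_smul, zero_smul])]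
    rw [Finset.sum_ite_eq, if_pos (Finset.mem_univ i)]
  have hpiW'_g : ∀ j, piW' (g j) = g j := by
    intro j
    rw [hpiW'_apply]
    rw [Finset.sum_congr rfl (fun i _ => by
      rw [heg, ite_smul, one_smul, zero_smul])]
    rw [Finset.sum_ite_eq', if_pos (Finset.mem_univ j)]
  have hpiWid : ∀ x ∈ W, piW x = x := by
    have hle : W ≤ LinearMap.ker (piW - LinearMap.id) := by
      rw [← he_span, Submodule.span_le]
      rintro _ ⟨i, rfl⟩
      simp only [SetLike.mem_coe, LinearMap.mem_ker, LinearMap.sub_apply, LinearMap.id_apply,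
        hpiW_e i, sub_self]
    intro x hx
    have := hle hx
    rw [LinearMap.mem_ker, LinearMap.sub_apply, LinearMap.id_apply, sub_eq_zero] at this
    exact this
  have hpiW'id : ∀ x ∈ W', piW' x = x := by
    have hle : W' ≤ LinearMap.ker (piW' - LinearMap.id) := by
      rw [hW', Submodule.span_le]
      rintro _ ⟨j, rfl⟩
      simp only [SetLike.mem_coe, LinearMap.mem_ker, LinearMap.sub_apply, LinearMap.id_apply,
        hpiW'_g j, sub_self]
    intro x hx
    have := hle hx
    rw [LinearMap.mem_ker, LinearMap.sub_apply, LinearMap.id_apply, sub_eq_zero] at this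
    exact this
  have hpiWkill : ∀ x ∈ perp Q (W' : Set V), piW x = 0 := by
    intro x hx
    rw [hpiW_apply]
    rw [Finset.sum_congr rfl (fun j _ => by
      rw [polar_comm, hx (g j) (hg_mem j), zero_smul])]
    exact Finset.sum_const_zero
  have hpiW'kill : ∀ x ∈ perp Q (W : Set V), piW' x = 0 := by
    intro x hx
    rw [hpiW'_apply]
    rw [Finset.sum_congr rfl (fun i _ => by
      rw [polar_comm, hx (e i) (he_mem i), zero_smul])]
    exact Finset.sum_const_zero
  refine ⟨W', perp Q (W : Set V) ⊓ perp Q (W' : Set V), piW, piW', hW'Q, hW'polar, rfl,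
    hpiWmem, hpiW'mem, hpiWid, hpiW'id, hpiWkill, hpiW'kill, ?_⟩
  intro x
  have hu : ∀ (y : V), (∀ i, polar Q y (e i) = 0) → y ∈ perp Q (W : Set V) := by
    intro y hy
    have hle : W ≤ LinearMap.ker (Q.polarBilin.flip y) := by
      rw [← he_span, Submodule.span_le]
      rintro _ ⟨i, rfl⟩
      simp only [SetLike.mem_coe, LinearMap.mem_ker, LinearMap.flip_apply,
        polarBilin_apply_apply]
      rw [polar_comm]
      exact hy i
    intro z hz
    have := hle hz
    rw [LinearMap.mem_ker, LinearMap.flip_apply, polarBilin_apply_apply] at this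
    rw [polar_comm]
    exact this
  have hu' : ∀ (y : V), (∀ j, polar Q y (g j) = 0) → y ∈ perp Q (W' : Set V) := by
    intro y hy
    have hle : W' ≤ LinearMap.ker (Q.polarBilin.flip y) := by
      rw [hW', Submodule.span_le]
      rintro _ ⟨j, rfl⟩
      simp only [SetLike.mem_coe, LinearMap.mem_ker, LinearMap.flip_apply,
        polarBilin_apply_apply]
      rw [polar_comm]
      exact hy j
    intro z hz
    have := hle hz
    rw [LinearMap.mem_ker, LinearMap.flip_apply, polarBilin_apply_apply] at this
    rw [polar_comm]
    exact this
  constructor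
  · apply hu
    intro i
    rw [polar_sub_left, polar_sub_left]
    have h1 : polar Q (piW x) (e i) = 0 := hWpolar _ (hpiWmem x) _ (he_mem i)
    have h2 : polar Q (piW' x) (e i) = polar Q (e i) x := by
      rw [hpiW'_apply, polar_sum_left]
      rw [Finset.sum_congr rfl (fun l _ => by
        rw [polar_smul_left, smul_eq_mul, polar_comm (⇑Q) (g l) (e i), heg, mul_ite, mul_one,
          mul_zero])]
      rw [Finset.sum_ite_eq, if_pos (Finset.mem_univ i)]
    rw [h1, h2, polar_comm]
    ring
  · apply hu'
    intro j
    rw [polar_sub_left, polar_sub_left]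
    have h1 : polar Q (piW' x) (g j) = 0 := hW'polar _ (hpiW'mem x) _ (hg_mem j)
    have h2 : polar Q (piW x) (g j) = polar Q (g j) x := by
      rw [hpiW_apply, polar_sum_left]
      rw [Finset.sum_congr rfl (fun l _ => by
        rw [polar_smul_left, smul_eq_mul, heg, mul_ite, mul_one, mul_zero])]
      rw [Finset.sum_ite_eq', if_pos (Finset.mem_univ j)]
    rw [h1, h2, polar_comm]
    ring
end Hyperbolic

section Main

variable [Field k] [AddCommGroup V] [Module k V]

/-- The conclusion of statement 8. -/
def Concl (Q : QuadraticForm k V) (X : ℤ → Submodule k V) : Prop :=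
  ∃ Y : ℤ → Submodule k V,
    DirectSum.IsInternal Y ∧
    (∀ a : ℤ, X a = ⨆ (a' : ℤ) (_ : a ≤ a'), Y a') ∧
    (∀ a a' : ℤ, a + a' ≠ 0 → ∀ x ∈ Y a, ∀ y ∈ Y a', QuadraticMap.polar Q x y = 0) ∧
    (∀ a : ℤ, a ≠ 0 → ∀ x ∈ Y a, Q x = 0)

lemma antitoneX (X : ℤ → Submodule k V) (h : ∀ a, X (a + 1) ≤ X a) : Antitone X := by
  have key : ∀ (n : ℕ) (a : ℤ), X (a + n) ≤ X a := by
    intro n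
    induction n with
    | zero => intro a; simp
    | succ n ihn =>
      intro a
      have h1 : (a : ℤ) + ((n : ℕ) + 1 : ℕ) = (a + n) + 1 := by push_cast; ring
      rw [h1]
      exact le_trans (h (a + n)) (ihn a)
  intro a b hab
  have hb : b = a + ((b - a).toNat : ℤ) := by omega
  rw [hb]
  exact key _ a

lemma trivialCase (Q : QuadraticForm k V) (X : ℤ → Submodule k V) (hX : IsQFiltration Q X)
    (h1 : X 1 = ⊥) : Concl Q X := by
  classical
  obtain ⟨hstep, -, -, hpc⟩ := hX
  have hanti := antitoneX X hstep
  have hX0 : X 0 = ⊤ := by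
    have h := (hpc 1 le_rfl).2
    rw [h1] at h
    have h0 : (1 : ℤ) - 1 = 0 := by norm_num
    rw [h0] at h
    rw [h, perp_bot]
  set Y : ℤ → Submodule k V := fun a => if a = 0 then ⊤ else ⊥ with hYdef
  have hY0 : Y 0 = ⊤ := by simp [hYdef]
  have hYne : ∀ a : ℤ, a ≠ 0 → Y a = ⊥ := fun a ha => by simp [hYdef, ha]
  refine ⟨Y, ?_, ?_, ?_, ?_⟩
  · rw [DirectSum.isInternal_submodule_iff_iSupIndep_and_iSup_eq_top]
    constructor
    · intro a
      by_cases ha : a = 0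
      · subst ha
        have hle : (⨆ (j : ℤ), ⨆ (_ : j ≠ 0), Y j) ≤ ⊥ :=
          iSup₂_le fun j hj => by rw [hYne j hj]
        exact disjoint_bot_right.mono_right hle
      · rw [hYne a ha]
        exact disjoint_bot_left
    · have h := le_iSup Y 0
      rw [hY0] at h
      exact top_unique h
  · intro a
    by_cases ha : a ≤ 0
    · have hXa : X a = ⊤ := top_unique (hX0 ▸ hanti ha)
      have h2 : Y 0 ≤ ⨆ (a' : ℤ), ⨆ (_ : a ≤ a'), Y a' := le_iSup₂ (f := fun (a' : ℤ) (_ : a ≤ a') => Y a') (0 : ℤ) ha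
      rw [hY0] at h2
      rw [hXa]
      exact (top_unique h2).symm
    · push_neg at ha
      have hXa : X a = ⊥ := le_bot_iff.mp (h1 ▸ hanti (by omega : (1:ℤ) ≤ a))
      rw [hXa]
      have hle : (⨆ (a' : ℤ), ⨆ (_ : a ≤ a'), Y a') ≤ ⊥ :=
        iSup₂_le fun a' ha' => by rw [hYne a' (by omega)]
      exact (le_antisymm hle bot_le).symm
  · intro a a' hne x hx y hy
    by_cases ha : a = 0
    · subst ha
      have ha' : a' ≠ 0 := by omega
      rw [hYne a' ha', Submodule.mem_bot] at hy
      rw [hy, polar_zero_right]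
    · rw [hYne a ha, Submodule.mem_bot] at hx
      rw [hx, polar_zero_left]
  · intro a ha x hx
    rw [hYne a ha, Submodule.mem_bot] at hx
    rw [hx, QuadraticMap.map_zero]

end Main

section MainAux

variable [Field k]

lemma mainAux : ∀ (n : ℕ) {VV : Type u_2} [AddCommGroup VV] [Module k VV]
    [FiniteDimensional k VV] (Q : QuadraticForm k VV), QNondeg Q →
    ∀ (X : ℤ → Submodule k VV), IsQFiltration Q X → Module.finrank k VV ≤ n → Concl Q X := by
  intro n
  induction n with
  | zero =>
    intro VV _ _ _ Q hQ X hX hn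
    have hsing : Subsingleton VV := by
      have h0 : Module.finrank k VV = 0 := Nat.le_zero.mp hn
      exact Module.finrank_zero_iff.mp h0
    have h1 : X 1 = ⊥ := by
      rw [eq_bot_iff]
      intro x _
      rw [Submodule.mem_bot]
      exact Subsingleton.elim x 0
    exact trivialCase Q X hX h1
  | succ n ih =>
    intro VV _ _ _ Q hQ X hX hn
    classical
    by_cases h1 : X 1 = ⊥
    · exact trivialCase Q X hX h1
    obtain ⟨hstep, hTopEx, ⟨a0, hbot⟩, hpc⟩ := hX
    have hX' : IsQFiltration Q X := ⟨hstep, hTopEx, ⟨a0, hbot⟩, hpc⟩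
    have hanti := antitoneX X hstep
    obtain ⟨m, hmne, hmax⟩ := Int.exists_greatest_of_bdd (P := fun a => X a ≠ ⊥)
      ⟨a0, fun z hz => le_of_not_gt fun hlt => hz (le_bot_iff.mp (hbot ▸ hanti hlt.le))⟩ ⟨1, h1⟩
    have hm1 : (1 : ℤ) ≤ m := hmax 1 h1
    set W := X m with hWdef
    have hWQ : ∀ x ∈ W, Q x = 0 := (hpc m hm1).1
    have hWperp : X (1 - m) = perp Q (W : Set VV) := (hpc m hm1).2
    have hXbot : ∀ a, m < a → X a = ⊥ := by
      intro a ha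
      by_contra h
      exact absurd (hmax a h) (by omega)
    have hXtopm : X (-m) = ⊤ := by
      have h2 := (hpc (m + 1) (by omega)).2
      rw [hXbot (m + 1) (by omega)] at h2
      have he : (1 : ℤ) - (m + 1) = -m := by ring
      rw [he] at h2
      rw [h2, perp_bot]
    obtain ⟨W', U, piW, piW', hW'Q, hW'polar, hUdef, hpiWmem, hpiW'mem, hpiWid, hpiW'id,
      hpiWkill, hpiW'kill, hrest⟩ := hyperbolic Q hQ W hWQ
    have hWpolar : ∀ x ∈ W, ∀ y ∈ W, polar Q x y = 0 := by
      intro x hx y hy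
      rw [polar, hWQ _ (add_mem hx hy), hWQ x hx, hWQ y hy]; ring
    have hWleperp : W ≤ perp Q (W : Set VV) := fun x hx y hy => hWpolar x hx y hy
    have hW'leperp : W' ≤ perp Q (W' : Set VV) := fun x hx y hy => hW'polar x hx y hy
    have hUW : U ≤ perp Q (W : Set VV) := hUdef ▸ inf_le_left
    have hUW' : U ≤ perp Q (W' : Set VV) := hUdef ▸ inf_le_right
    have hpiWkillU : ∀ x ∈ U, piW x = 0 := fun x hx => hpiWkill x (hUW' hx)
    have hpiW'killU : ∀ x ∈ U, piW' x = 0 := fun x hx => hpiW'kill x (hUW hx)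
    have hpiWkillW' : ∀ x ∈ W', piW x = 0 := fun x hx => hpiWkill x (hW'leperp hx)
    have hpiW'killW : ∀ x ∈ W, piW' x = 0 := fun x hx => hpiW'kill x (hWleperp hx)
    have hdecomp : ∀ x : VV, x = piW x + piW' x + (x - piW x - piW' x) := fun x => by abel
    have hWUbot : W ⊓ U = ⊥ := by
      rw [eq_bot_iff]
      intro x hx
      obtain ⟨hxW, hxU⟩ := Submodule.mem_inf.mp hx
      rw [Submodule.mem_bot, ← hpiWid x hxW]
      exact hpiWkillU x hxU
    have hglue_inf : (W ⊔ W') ⊓ U = ⊥ := by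
      rw [eq_bot_iff]
      intro x hx
      obtain ⟨hx1, hxU⟩ := Submodule.mem_inf.mp hx
      obtain ⟨w, hw, w', hw', rfl⟩ := Submodule.mem_sup.mp hx1
      have hwz : w = 0 := by
        have ha : piW (w + w') = w := by
          rw [map_add, hpiWid w hw, hpiWkillW' w' hw', add_zero]
        have hb : piW (w + w') = 0 := hpiWkillU _ hxU
        rw [ha] at hb; exact hb
      have hw'z : w' = 0 := by
        have ha : piW' (w + w') = w' := by
          rw [map_add, hpiW'id w' hw', hpiW'killW w hw, zero_add]
        have hb : piW' (w + w') = 0 := hpiW'killU _ hxU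
        rw [ha] at hb; exact hb
      rw [Submodule.mem_bot, hwz, hw'z, add_zero]
    have hglue : ∀ Z : Submodule k VV, Z ≤ U → ((W ⊔ W') ⊔ Z) ⊓ U = Z := by
      intro Z hZ
      rw [sup_comm (W ⊔ W') Z, sup_inf_assoc_of_le (W ⊔ W') hZ, hglue_inf, sup_bot_eq]
    have htop : W ⊔ (W' ⊔ U) = ⊤ := by
      rw [eq_top_iff]
      intro x _
      exact Submodule.mem_sup.mpr ⟨piW x, hpiWmem x, piW' x + (x - piW x - piW' x),
        Submodule.mem_sup.mpr ⟨piW' x, hpiW'mem x, _, hrest x, rfl⟩, by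
          rw [← add_assoc]; exact (hdecomp x).symm⟩
    have hWsplit : perp Q (W : Set VV) = W ⊔ U := by
      apply le_antisymm
      · intro x hx
        have h0 : piW' x = 0 := hpiW'kill x hx
        refine Submodule.mem_sup.mpr ⟨piW x, hpiWmem x, x - piW x - piW' x, hrest x, ?_⟩
        rw [h0]; abel
      · exact sup_le hWleperp hUW
    -- the quadratic form on U
    set QU : QuadraticForm k ↥U := Q.comp U.subtype with hQUdef
    have hQUapp : ∀ u : U, QU u = Q (u : VV) := fun u => rfl
    have hQUpolar : ∀ u v : U, polar QU u v = polar Q (u : VV) (v : VV) := fun u v =>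
      polar_comp' Q U.subtype u v
    have hQU_nd : QNondeg QU := by
      have key : ∀ w : ↥U, w ∈ rad QU → (w : VV) ∈ rad Q := by
        intro w hw
        rw [mem_rad]
        intro y
        have hy := hdecomp y
        rw [hy, polar_add_right, polar_add_right]
        have ha : polar Q (w : VV) (piW y) = 0 := hUW w.2 _ (hpiWmem y)
        have hb : polar Q (w : VV) (piW' y) = 0 := hUW' w.2 _ (hpiW'mem y)
        have hc : polar Q (w : VV) (y - piW y - piW' y) = 0 := by
          have hm := (mem_rad QU).mp hw ⟨_, hrest y⟩
          rw [hQUpolar] at hm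
          exact hm
        rw [ha, hb, hc]; ring
      intro u hu v hv huv
      rw [SetLike.mem_coe] at hu hv
      have := hQ (SetLike.mem_coe.mpr (key u hu)) (SetLike.mem_coe.mpr (key v hv)) huv
      exact Subtype.coe_injective this
    -- the filtration on U
    set X2 : ℤ → Submodule k ↥U := fun a => (X a).comap U.subtype with hX2def
    have hXsplit : ∀ a, 1 - m ≤ a → a ≤ m → X a = W ⊔ (X a ⊓ U) := by
      intro a h1a h2a
      have hle1 : X a ≤ W ⊔ U := by rw [← hWsplit, ← hWperp]; exact hanti h1a
      have hle2 : W ≤ X a := hanti h2a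
      apply le_antisymm
      · intro x hx
        have hx2 : x ∈ (W ⊔ U) ⊓ X a := Submodule.mem_inf.mpr ⟨hle1 hx, hx⟩
        rw [sup_inf_assoc_of_le U hle2] at hx2
        rwa [inf_comm U (X a)] at hx2
      · exact sup_le hle2 inf_le_left
    have hmapX2 : ∀ a, Submodule.map U.subtype (X2 a) = X a ⊓ U := by
      intro a
      rw [hX2def]
      simp only
      rw [Submodule.map_comap_subtype, inf_comm]
    have hUleX1m : U ≤ X (1 - m) := by
      rw [hWperp, hWsplit]; exact le_sup_right
    have hX2top : X2 (1 - m) = ⊤ := by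
      rw [hX2def]; simp only; rw [Submodule.comap_subtype_eq_top]; exact hUleX1m
    have hX2m : X2 m = ⊥ := by
      rw [hX2def]; simp only
      rw [eq_bot_iff]
      intro x hx
      have hmem : (x : VV) ∈ W ⊓ U := Submodule.mem_inf.mpr ⟨hx, x.2⟩
      rw [hWUbot, Submodule.mem_bot] at hmem
      rw [Submodule.mem_bot]
      exact Subtype.coe_injective (by simpa using hmem)
    have hX2filt : IsQFiltration QU X2 := by
      refine ⟨fun a => Submodule.comap_mono (hstep a), ⟨1 - m, hX2top⟩, ⟨m, hX2m⟩, ?_⟩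
      intro a ha
      constructor
      · intro x hx
        rw [hQUapp]
        exact (hpc a ha).1 _ hx
      · by_cases hcase : a ≤ m
        · apply le_antisymm
          · intro u hu y hy
            rw [hQUpolar]
            have hmem : (u : VV) ∈ perp Q ((X a : Submodule k VV) : Set VV) := by
              rw [← (hpc a ha).2]; exact hu
            exact hmem _ hy
          · intro u hu
            show (u : VV) ∈ X (1 - a)
            rw [(hpc a ha).2]
            intro y hy
            rw [SetLike.mem_coe, hXsplit a (by omega) hcase] at hy
            obtain ⟨w, hw, z, hz, rfl⟩ := Submodule.mem_sup.mp hy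
            rw [polar_add_right]
            have hA : polar Q (u : VV) w = 0 := hUW u.2 w hw
            obtain ⟨hz1, hz2⟩ := Submodule.mem_inf.mp hz
            have hB : polar Q (u : VV) z = 0 := by
              have hm2 := hu ⟨z, hz2⟩ (show (⟨z, hz2⟩ : ↥U) ∈ (X2 a : Set ↥U) from hz1)
              rw [hQUpolar] at hm2
              exact hm2
            rw [hA, hB, add_zero]
        · push_neg at hcase
          have hXa : X a = ⊥ := hXbot a hcase
          have hX2a : X2 a = ⊥ := by
            rw [hX2def]; simp only
            rw [hXa, Submodule.comap_bot, Submodule.ker_subtype]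
          rw [hX2a, perp_bot]
          rw [hX2def]; simp only
          rw [Submodule.comap_subtype_eq_top]
          exact le_trans hUleX1m (hanti (by omega))
    -- rank decrease
    have hrank : Module.finrank k ↥U ≤ n := by
      have hA := Submodule.finrank_sup_add_finrank_inf_eq W U
      rw [hWUbot] at hA
      have hB : Module.finrank k ↥(W ⊔ U) ≤ Module.finrank k VV := Submodule.finrank_le _
      have hC : Module.finrank k ↥(⊥ : Submodule k VV) = 0 := finrank_bot k VV
      have hD : (0 : ℕ) < Module.finrank k ↥W :=
        Nat.pos_of_ne_zero fun h => hmne (hWdef ▸ Submodule.finrank_eq_zero.mp h)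
      omega
    obtain ⟨Y', hY'int, hY'sup, hY'polar, hY'Q⟩ := ih QU hQU_nd X2 hX2filt hrank
    obtain ⟨hY'indep, hY'supT⟩ :=
      (DirectSum.isInternal_submodule_iff_iSupIndep_and_iSup_eq_top Y').mp hY'int
    have hY'botHigh : ∀ b, m ≤ b → Y' b = ⊥ := by
      intro b hb
      have hh : Y' b ≤ X2 m := by
        rw [hY'sup m]
        exact le_iSup₂ (f := fun (b' : ℤ) (_ : m ≤ b') => Y' b') b hb
      rw [hX2m] at hh
      exact le_bot_iff.mp hh
    have hY'botLow : ∀ b, b ≤ -m → Y' b = ⊥ := by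
      intro b hb
      have hindep := hY'indep b
      have htop' : (⨆ (c : ℤ), ⨆ (_ : c ≠ b), Y' c) = ⊤ := by
        apply top_unique
        rw [← hX2top, hY'sup (1 - m)]
        exact iSup₂_le fun c hc => le_iSup₂ (f := fun (c' : ℤ) (_ : c' ≠ b) => Y' c') c (by omega)
      rw [htop', disjoint_top] at hindep
      exact hindep
    -- the grading
    set Y : ℤ → Submodule k VV := fun a =>
      if a = m then W else if a = -m then W' else Submodule.map U.subtype (Y' a) with hYdef
    have hYm : Y m = W := by simp [hYdef]
    have hYnegm : Y (-m) = W' := by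
      have hne : -m ≠ m := by omega
      simp [hYdef, hne]
    have hYmid : ∀ b, b ≠ m → b ≠ -m → Y b = Submodule.map U.subtype (Y' b) := by
      intro b hb1 hb2
      simp [hYdef, hb1, hb2]
    have hmapY : ∀ b, Submodule.map U.subtype (Y' b) ≤ Y b := by
      intro b
      by_cases hb1 : b = m
      · rw [hb1, hY'botHigh m le_rfl, Submodule.map_bot]; exact bot_le
      · by_cases hb2 : b = -m
        · rw [hb2, hY'botLow (-m) le_rfl, Submodule.map_bot]; exact bot_le
        · rw [hYmid b hb1 hb2]
    have hYleU : ∀ b, b ≠ m → b ≠ -m → Y b ≤ U := fun b hb1 hb2 => by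
      rw [hYmid b hb1 hb2]; exact Submodule.map_subtype_le _ _
    have hUeq : U = ⨆ b : ℤ, Submodule.map U.subtype (Y' b) := by
      rw [← Submodule.map_iSup, hY'supT, Submodule.map_subtype_top]
    refine ⟨Y, ?_, ?_, ?_, ?_⟩
    · rw [DirectSum.isInternal_submodule_iff_iSupIndep_and_iSup_eq_top]
      constructor
      · intro a
        by_cases ham : a = m
        · have hbound : (⨆ (b : ℤ), ⨆ (_ : b ≠ a), Y b) ≤ W' ⊔ U := by
            apply iSup₂_le
            intro b hb
            by_cases hb2 : b = -m
            · rw [hb2, hYnegm]; exact le_sup_left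
            · exact (hYleU b (fun h => hb (h.trans ham.symm)) hb2).trans le_sup_right
          have hd1 : Disjoint W (W' ⊔ U) := by
            rw [disjoint_iff, eq_bot_iff]
            intro x hx
            obtain ⟨hxW, hx2⟩ := Submodule.mem_inf.mp hx
            obtain ⟨w', hw', u, hu, rfl⟩ := Submodule.mem_sup.mp hx2
            have ha : piW (w' + u) = w' + u := hpiWid _ hxW
            have hb : piW (w' + u) = 0 := by
              rw [map_add, hpiWkillW' w' hw', hpiWkillU u hu, add_zero]
            rw [Submodule.mem_bot, ← ha, hb]
          have hYa : Y a = W := by rw [ham, hYm]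
          rw [hYa]
          exact hd1.mono_right hbound
        · by_cases ham2 : a = -m
          · have hbound : (⨆ (b : ℤ), ⨆ (_ : b ≠ a), Y b) ≤ W ⊔ U := by
              apply iSup₂_le
              intro b hb
              by_cases hb2 : b = m
              · rw [hb2, hYm]; exact le_sup_left
              · exact (hYleU b hb2 (fun h => hb (h.trans ham2.symm))).trans le_sup_right
            have hd1 : Disjoint W' (W ⊔ U) := by
              rw [disjoint_iff, eq_bot_iff]
              intro x hx
              obtain ⟨hxW', hx2⟩ := Submodule.mem_inf.mp hx
              obtain ⟨w, hw, u, hu, rfl⟩ := Submodule.mem_sup.mp hx2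
              have ha : piW' (w + u) = w + u := hpiW'id _ hxW'
              have hb : piW' (w + u) = 0 := by
                rw [map_add, hpiW'killW w hw, hpiW'killU u hu, add_zero]
              rw [Submodule.mem_bot, ← ha, hb]
            have hYa : Y a = W' := by rw [ham2, hYnegm]
            rw [hYa]
            exact hd1.mono_right hbound
          · have hbound : (⨆ (b : ℤ), ⨆ (_ : b ≠ a), Y b) ≤
                (W ⊔ W') ⊔ Submodule.map U.subtype (⨆ (b : ℤ), ⨆ (_ : b ≠ a), Y' b) := by
              apply iSup₂_le
              intro b hb
              by_cases hb1 : b = m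
              · subst hb1; rw [hYm]; exact le_sup_of_le_left le_sup_left
              · by_cases hb2 : b = -m
                · subst hb2; rw [hYnegm]; exact le_sup_of_le_left le_sup_right
                · rw [hYmid b hb1 hb2]
                  exact le_sup_of_le_right (Submodule.map_mono
                    (le_iSup₂ (f := fun (b' : ℤ) (_ : b' ≠ a) => Y' b') b hb))
            rw [hYmid a ham ham2]
            refine Disjoint.mono_right hbound ?_
            rw [disjoint_iff, eq_bot_iff]
            intro x hx
            obtain ⟨hx1, hx2⟩ := Submodule.mem_inf.mp hx
            have hxU : x ∈ U := Submodule.map_subtype_le _ _ hx1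
            have hxZ : x ∈ Submodule.map U.subtype (⨆ (b : ℤ), ⨆ (_ : b ≠ a), Y' b) := by
              have hm2 : x ∈ ((W ⊔ W') ⊔
                  Submodule.map U.subtype (⨆ (b : ℤ), ⨆ (_ : b ≠ a), Y' b)) ⊓ U :=
                Submodule.mem_inf.mpr ⟨hx2, hxU⟩
              rw [hglue _ (Submodule.map_subtype_le _ _)] at hm2
              exact hm2
            have hm3 : x ∈ Submodule.map U.subtype
                (Y' a ⊓ ⨆ (b : ℤ), ⨆ (_ : b ≠ a), Y' b) := by
              rw [Submodule.map_inf U.subtype Subtype.coe_injective]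
              exact Submodule.mem_inf.mpr ⟨hx1, hxZ⟩
            rw [disjoint_iff.mp (hY'indep a), Submodule.map_bot] at hm3
            exact hm3
      · apply top_unique
        rw [← htop]
        have hWle : W ≤ iSup Y := by
          have h := le_iSup Y m; rw [hYm] at h; exact h
        have hW'le : W' ≤ iSup Y := by
          have h := le_iSup Y (-m); rw [hYnegm] at h; exact h
        have hUle : U ≤ iSup Y := by
          rw [hUeq]
          exact iSup_le fun b => (hmapY b).trans (le_iSup Y b)
        exact sup_le hWle (sup_le hW'le hUle)
    · intro a
      rcases lt_trichotomy m a with hc | hc | hc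
      · rw [hXbot a hc]
        have hle : (⨆ (a' : ℤ), ⨆ (_ : a ≤ a'), Y a') ≤ ⊥ := by
          apply iSup₂_le
          intro b hb
          rw [hYmid b (by omega) (by omega), hY'botHigh b (by omega), Submodule.map_bot]
        exact (le_antisymm hle bot_le).symm
      · rw [← hc]
        have hle1 : (⨆ (a' : ℤ), ⨆ (_ : m ≤ a'), Y a') ≤ W := by
          apply iSup₂_le
          intro b hb
          rcases eq_or_lt_of_le hb with hb1 | hb1
          · rw [← hb1, hYm]
          · rw [hYmid b (by omega) (by omega), hY'botHigh b (by omega), Submodule.map_bot]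
            exact bot_le
        have hle2 : W ≤ ⨆ (a' : ℤ), ⨆ (_ : m ≤ a'), Y a' := by
          have h := le_iSup₂ (f := fun (a' : ℤ) (_ : m ≤ a') => Y a') m le_rfl
          rw [hYm] at h; exact h
        exact le_antisymm hle2 hle1
      · by_cases hc2 : -m < a
        · rw [hXsplit a (by omega) (by omega), ← hmapX2 a, hY'sup a]
          apply le_antisymm
          · apply sup_le
            · have h := le_iSup₂ (f := fun (a' : ℤ) (_ : a ≤ a') => Y a') m (by omega)
              rw [hYm] at h; exact h
            · simp only [Submodule.map_iSup]
              exact iSup₂_le fun b hb => (hmapY b).trans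
                (le_iSup₂ (f := fun (a' : ℤ) (_ : a ≤ a') => Y a') b hb)
          · apply iSup₂_le
            intro b hb
            by_cases hb1 : b = m
            · subst hb1; rw [hYm]; exact le_sup_left
            · have hb2 : b ≠ -m := by omega
              rw [hYmid b hb1 hb2]
              exact le_sup_of_le_right (Submodule.map_mono
                (le_iSup₂ (f := fun (b' : ℤ) (_ : a ≤ b') => Y' b') b hb))
        · push_neg at hc2
          have hXa : X a = ⊤ := top_unique (hXtopm ▸ hanti hc2)
          rw [hXa]
          symm
          rw [eq_top_iff, ← htop]
          have hA : W ≤ ⨆ (a' : ℤ), ⨆ (_ : a ≤ a'), Y a' := by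
            have h := le_iSup₂ (f := fun (a' : ℤ) (_ : a ≤ a') => Y a') m (by omega)
            rw [hYm] at h; exact h
          have hB : W' ≤ ⨆ (a' : ℤ), ⨆ (_ : a ≤ a'), Y a' := by
            have h := le_iSup₂ (f := fun (a' : ℤ) (_ : a ≤ a') => Y a') (-m) (by omega)
            rw [hYnegm] at h; exact h
          have hC : U ≤ ⨆ (a' : ℤ), ⨆ (_ : a ≤ a'), Y a' := by
            rw [hUeq]
            apply iSup_le
            intro b
            by_cases hb : a ≤ b
            · exact (hmapY b).trans (le_iSup₂ (f := fun (a' : ℤ) (_ : a ≤ a') => Y a') b hb)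
            · rw [hY'botLow b (by omega), Submodule.map_bot]
              exact bot_le
          exact sup_le hA (sup_le hB hC)
    · intro a a' hne x hx y hy
      have hWU0 : ∀ x ∈ W, ∀ y ∈ U, polar Q x y = 0 := fun x hx y hy => by
        rw [polar_comm]; exact hUW hy x hx
      have hW'U0 : ∀ x ∈ W', ∀ y ∈ U, polar Q x y = 0 := fun x hx y hy => by
        rw [polar_comm]; exact hUW' hy x hx
      by_cases ha1 : a = m
      · rw [ha1, hYm] at hx
        by_cases hb1 : a' = m
        · rw [hb1, hYm] at hy; exact hWpolar x hx y hy
        · by_cases hb2 : a' = -m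
          · exact absurd (by omega : a + a' = 0) hne
          · exact hWU0 x hx y (hYleU a' hb1 hb2 hy)
      · by_cases ha2 : a = -m
        · rw [ha2, hYnegm] at hx
          by_cases hb1 : a' = m
          · exact absurd (by omega : a + a' = 0) hne
          · by_cases hb2 : a' = -m
            · rw [hb2, hYnegm] at hy; exact hW'polar x hx y hy
            · exact hW'U0 x hx y (hYleU a' hb1 hb2 hy)
        · rw [hYmid a ha1 ha2] at hx
          obtain ⟨x', hx', rfl⟩ := Submodule.mem_map.mp hx
          by_cases hb1 : a' = m
          · rw [hb1, hYm] at hy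
            rw [polar_comm]
            exact hWU0 y hy _ (Submodule.map_subtype_le _ _
              (Submodule.mem_map_of_mem hx'))
          · by_cases hb2 : a' = -m
            · rw [hb2, hYnegm] at hy
              rw [polar_comm]
              exact hW'U0 y hy _ (Submodule.map_subtype_le _ _
                (Submodule.mem_map_of_mem hx'))
            · rw [hYmid a' hb1 hb2] at hy
              obtain ⟨y', hy', rfl⟩ := Submodule.mem_map.mp hy
              have h := hY'polar a a' hne x' hx' y' hy'
              rw [hQUpolar] at h
              exact h
    · intro a ha x hx
      by_cases ha1 : a = m
      · rw [ha1, hYm] at hx; exact hWQ x hx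
      · by_cases ha2 : a = -m
        · rw [ha2, hYnegm] at hx; exact hW'Q x hx
        · rw [hYmid a ha1 ha2] at hx
          obtain ⟨x', hx', rfl⟩ := Submodule.mem_map.mp hx
          have h := hY'Q a ha x' hx'
          rw [hQUapp] at h
          exact h

end MainAux

/-- every `Q`-filtration admits a compatible direct sum decomposition
`V = ⊕_a X^a` with `X^{≥a} = ⊕_{a' ≥ a} X^{a'}`, `⟨X^a, X^{a'}⟩ = 0` for `a + a' ≠ 0`,
and `Q|_{X^a} = 0` for `a ≠ 0`. -/
theorem stmt8 [Field k] [AddCommGroup V] [Module k V] [FiniteDimensional k V]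
    (Q : QuadraticForm k V) (hQ : QNondeg Q)
    (X : ℤ → Submodule k V) (hX : IsQFiltration Q X) :
    ∃ Y : ℤ → Submodule k V,
      DirectSum.IsInternal Y ∧
      (∀ a : ℤ, X a = ⨆ (a' : ℤ) (_ : a ≤ a'), Y a') ∧
      (∀ a a' : ℤ, a + a' ≠ 0 → ∀ x ∈ Y a, ∀ y ∈ Y a', QuadraticMap.polar Q x y = 0) ∧
      (∀ a : ℤ, a ≠ 0 → ∀ x ∈ Y a, Q x = 0) := by
  exact mainAux (Module.finrank k V) Q hQ X hX le_rfl
end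

section
/- Let k be a finite field or an algebraically closed field of characteristic 2, Q a nondegenerate quadratic form on V, and N ∈ 𝓜_Q with N ≠ 0; let L := L_N. Then L ⊆ L^⊥ and Q vanishes identically on L. -/
open QuadraticMap

variable {k V : Type*}

open scoped Classical in
/-- The subspace `L_N ⊆ V` (as a set) attached to `N ≠ 0` with `e = e_N`, where
`λ(x) = ⟨x, N^{e-1}x⟩`: `L_N = N^{e-1}V` if `λ = 0`; `L_N = (ker λ)^⊥` if `λ ≠ 0` and
`R = 0`; `L_N = {x ∈ (ker λ)^⊥ : Q(x) = 0}` if `λ ≠ 0` and `R ≠ 0`. -/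
noncomputable def LsetN [Field k] [AddCommGroup V] [Module k V] (Q : QuadraticForm k V)
    (N : Module.End k V) (e : ℕ) : Set V :=
  if ∀ x : V, QuadraticMap.polar Q x ((N ^ (e - 1)) x) = 0 then
    Set.range fun x : V => (N ^ (e - 1)) x
  else if rad Q = ⊥ then
    (perp Q {x : V | QuadraticMap.polar Q x ((N ^ (e - 1)) x) = 0} : Set V)
  else
    {x : V | x ∈ perp Q {x : V | QuadraticMap.polar Q x ((N ^ (e - 1)) x) = 0} ∧ Q x = 0}



open Module

private lemma alt_rank_even (k : Type*) [Field k] :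
    ∀ (n : ℕ) (W : Type*) [AddCommGroup W] [Module k W] [FiniteDimensional k W],
      finrank k W ≤ n → ∀ β : W →ₗ[k] W →ₗ[k] k, (∀ x, β x x = 0) →
      Even (finrank k W - finrank k (LinearMap.ker β)) := by
  intro n
  induction n with
  | zero =>
      intro W _ _ _ hn β _
      have h1 : finrank k W = 0 := Nat.le_zero.mp hn
      simp [h1]
  | succ n ih =>
      intro W _ _ _ hn β halt
      by_cases h0 : ∀ x y, β x y = 0
      · have hker : LinearMap.ker β = ⊤ := by
          ext z
          simp only [LinearMap.mem_ker, Submodule.mem_top, iff_true]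
          ext u
          simp [h0]
        rw [hker, finrank_top]
        simp
      · push_neg at h0
        obtain ⟨x, y, hxy⟩ := h0
        have hskew : ∀ a b : W, β a b = - β b a := by
          intro a b
          have h := halt (a + b)
          simp only [_root_.map_add, LinearMap.add_apply, halt a, halt b, zero_add, add_zero] at h
          linear_combination h
        have hxK1 : β x x = 0 := halt x
        have hyx : β y x = - β x y := by rw [hskew y x]
        have hker_le : LinearMap.ker β ≤ LinearMap.ker (β x) ⊓ LinearMap.ker (β y) := by
          intro z hz
          rw [LinearMap.mem_ker] at hz
          rw [Submodule.mem_inf, LinearMap.mem_ker, LinearMap.mem_ker]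
          constructor
          · rw [hskew x z, hz]; simp
          · rw [hskew y z, hz]; simp
        have hr1 : finrank k (LinearMap.ker (β x)) + 1 = finrank k W := by
          have hsurj : Function.Surjective (β x) := by
            intro t
            refine ⟨(t / β x y) • y, ?_⟩
            rw [_root_.map_smul, smul_eq_mul]
            field_simp
          have := LinearMap.finrank_range_add_finrank_ker (β x)
          rw [LinearMap.range_eq_top.mpr hsurj, finrank_top, finrank_self] at this
          omega
        have hr2 : finrank k (LinearMap.ker (β y)) + 1 = finrank k W := by
          have hsurj : Function.Surjective (β y) := by
            intro t
            refine ⟨(-t / β x y) • x, ?_⟩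
            rw [_root_.map_smul, hyx, smul_eq_mul]
            field_simp
          have := LinearMap.finrank_range_add_finrank_ker (β y)
          rw [LinearMap.range_eq_top.mpr hsurj, finrank_top, finrank_self] at this
          omega
        have hsup : LinearMap.ker (β x) ⊔ LinearMap.ker (β y) = ⊤ := by
          apply Submodule.eq_top_of_finrank_eq
          have hlt : LinearMap.ker (β x) < LinearMap.ker (β x) ⊔ LinearMap.ker (β y) := by
            refine lt_of_le_of_ne le_sup_left fun h => ?_
            have hymem : y ∈ LinearMap.ker (β x) := by
              rw [h]
              exact Submodule.mem_sup_right (by rw [LinearMap.mem_ker]; exact halt y)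
            rw [LinearMap.mem_ker] at hymem
            exact hxy hymem
          have h1 := Submodule.finrank_lt_finrank_of_lt hlt
          have h2 : finrank k (LinearMap.ker (β x) ⊔ LinearMap.ker (β y) : Submodule k W)
              ≤ finrank k W := Submodule.finrank_le _
          omega
        have hinf : finrank k (LinearMap.ker (β x) ⊓ LinearMap.ker (β y) : Submodule k W) + 2
            = finrank k W := by
          have := Submodule.finrank_sup_add_finrank_inf_eq (LinearMap.ker (β x))
            (LinearMap.ker (β y))
          rw [hsup, finrank_top] at this
          omega
        have hcodis : Codisjoint (LinearMap.ker (β x) ⊓ LinearMap.ker (β y))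
            (Submodule.span k {x, y}) := by
          rw [codisjoint_iff, eq_top_iff]
          intro z _
          have hz' : z - (β x z / β x y) • y + (β y z / β x y) • x ∈
              LinearMap.ker (β x) ⊓ LinearMap.ker (β y) := by
            rw [Submodule.mem_inf, LinearMap.mem_ker, LinearMap.mem_ker]
            constructor
            · simp only [_root_.map_add, _root_.map_sub, _root_.map_smul, smul_eq_mul, halt x]
              field_simp
              ring
            · simp only [_root_.map_add, _root_.map_sub, _root_.map_smul, smul_eq_mul, halt y, hyx]
              field_simp
              ring
          have hsp : (β x z / β x y) • y - (β y z / β x y) • x ∈ Submodule.span k {x, y} := by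
            apply Submodule.sub_mem
            · exact Submodule.smul_mem _ _ (Submodule.subset_span (by simp))
            · exact Submodule.smul_mem _ _ (Submodule.subset_span (by simp))
          have hzeq : z = (z - (β x z / β x y) • y + (β y z / β x y) • x) +
              ((β x z / β x y) • y - (β y z / β x y) • x) := by abel
          rw [hzeq]
          exact Submodule.add_mem _ (Submodule.mem_sup_left hz') (Submodule.mem_sup_right hsp)
        have hBvanish : ∀ a ∈ LinearMap.ker (β x) ⊓ LinearMap.ker (β y),
            ∀ b ∈ Submodule.span k {x, y}, β a b = 0 := by
          intro a ha b hb
          rw [Submodule.mem_inf, LinearMap.mem_ker, LinearMap.mem_ker] at ha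
          obtain ⟨ha1, ha2⟩ := ha
          rw [Submodule.mem_span_pair] at hb
          obtain ⟨s, t, rfl⟩ := hb
          have hax : β a x = 0 := by rw [hskew a x, ha1]; simp
          have hay : β a y = 0 := by rw [hskew a y, ha2]; simp
          simp [hax, hay]
        have hkerres := LinearMap.BilinForm.ker_restrict_eq_of_codisjoint hcodis hBvanish
        have hfr_ker : finrank k (LinearMap.ker
              (LinearMap.BilinForm.restrict β (LinearMap.ker (β x) ⊓ LinearMap.ker (β y))))
            = finrank k (LinearMap.ker β) := by
          rw [hkerres]
          exact (Submodule.comapSubtypeEquivOfLe hker_le).finrank_eq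
        have halt' : ∀ z : (LinearMap.ker (β x) ⊓ LinearMap.ker (β y) : Submodule k W),
            LinearMap.BilinForm.restrict β _ z z = 0 := by
          intro z
          simp [LinearMap.BilinForm.restrict_apply, halt]
        have hih := ih (LinearMap.ker (β x) ⊓ LinearMap.ker (β y) : Submodule k W) (by omega)
          (LinearMap.BilinForm.restrict β _) halt'
        rw [hfr_ker] at hih
        have hle : finrank k (LinearMap.ker β) ≤
            finrank k (LinearMap.ker (β x) ⊓ LinearMap.ker (β y) : Submodule k W) := by
          calc finrank k (LinearMap.ker β)
              = finrank k (LinearMap.ker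
                (LinearMap.BilinForm.restrict β (LinearMap.ker (β x) ⊓ LinearMap.ker (β y))))
                := hfr_ker.symm
            _ ≤ _ := Submodule.finrank_le _
        rw [Nat.even_iff] at hih ⊢
        omega

section MainAux
open Module

variable {k V : Type*} [Field k] [CharP k 2] [AddCommGroup V] [Module k V]

private lemma mem_perp_iff (Q : QuadraticForm k V) (S : Set V) (x : V) :
    x ∈ perp Q S ↔ ∀ y ∈ S, polar Q x y = 0 := Iff.rfl

private lemma polar_rel (Q : QuadraticForm k V) (N : Module.End k V)
    (hQN : ∀ x, Q (N x) = - polar Q x (N x)) (x y : V) :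
    polar Q (N x) (N y) = polar Q (N x) y + polar Q x (N y) := by
  have expand : ∀ a b : V, Q (a + b) = polar Q a b + Q a + Q b := by
    intro a b; simp [polar]; ring
  have h := hQN (x + y)
  rw [map_add, expand, polar_add_left, polar_add_right, polar_add_right, hQN x, hQN y] at h
  have hc1 : polar Q (N x) y = polar Q y (N x) := polar_comm _ _ _
  have h2 : (2 : k) = 0 := by
    have := CharP.cast_eq_zero k 2
    exact_mod_cast this
  linear_combination h - hc1 - (polar Q x (N y) + polar Q y (N x)) * h2

private lemma vanish (Q : QuadraticForm k V) (N : Module.End k V) {e : ℕ} (he : N ^ e = 0)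
    (hrel : ∀ x y, polar Q (N x) (N y) = polar Q (N x) y + polar Q x (N y)) :
    ∀ (d a b : ℕ) (x y : V), e ≤ a + b → e - a ≤ d →
      polar Q ((N ^ a) x) ((N ^ b) y) = 0 := by
  intro d
  induction d with
  | zero =>
      intro a b x y hab ha
      have hNa : N ^ a = 0 := by
        have : N ^ a = N ^ (a - e) * N ^ e := by rw [← pow_add]; congr 1; omega
        rw [this, he, mul_zero]
      rw [hNa]
      simp [polar]
  | succ d ih =>
      intro a b x y hab ha
      by_cases hae : e ≤ a
      · have hNa : N ^ a = 0 := by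
          have : N ^ a = N ^ (a - e) * N ^ e := by rw [← pow_add]; congr 1; omega
          rw [this, he, mul_zero]
        rw [hNa]
        simp [polar]
      · push_neg at hae
        have hb1 : 1 ≤ b := by omega
        have key := hrel ((N ^ a) x) ((N ^ (b - 1)) y)
        have e1 : N ((N ^ a) x) = (N ^ (a + 1)) x := by
          rw [pow_succ']; rfl
        have e2 : N ((N ^ (b - 1)) y) = (N ^ b) y := by
          rw [show b = (b - 1) + 1 by omega, pow_succ']
          rfl
        rw [e1, e2] at key
        have v1 : polar Q ((N ^ (a + 1)) x) ((N ^ b) y) = 0 := ih (a + 1) b x y (by omega) (by omega)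
        have v2 : polar Q ((N ^ (a + 1)) x) ((N ^ (b - 1)) y) = 0 :=
          ih (a + 1) (b - 1) x y (by omega) (by omega)
        rw [v1, v2, zero_add] at key
        exact key.symm

private lemma selfadj (Q : QuadraticForm k V) (N : Module.End k V) {e : ℕ} (he : N ^ e = 0)
    (he2 : 2 ≤ e)
    (hrel : ∀ x y, polar Q (N x) (N y) = polar Q (N x) y + polar Q x (N y)) (x y : V) :
    polar Q ((N ^ (e - 1)) x) y = polar Q x ((N ^ (e - 1)) y) := by
  have two0 : ∀ a : k, a + a = 0 := CharTwo.add_self_eq_zero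
  have main : ∀ j, j ≤ e - 1 →
      polar Q ((N ^ (e - 1)) x) y = polar Q ((N ^ (e - 1 - j)) x) ((N ^ j) y) := by
    intro j
    induction j with
    | zero => intro _; simp
    | succ j ihj =>
        intro hj
        rw [ihj (by omega)]
        have key := hrel ((N ^ (e - 2 - j)) x) ((N ^ j) y)
        have e1 : N ((N ^ (e - 2 - j)) x) = (N ^ (e - 1 - j)) x := by
          rw [show e - 1 - j = (e - 2 - j) + 1 by omega, pow_succ']
          rfl
        have e2 : N ((N ^ j) y) = (N ^ (j + 1)) y := by rw [pow_succ']; rfl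
        rw [e1, e2] at key
        have v1 : polar Q ((N ^ (e - 1 - j)) x) ((N ^ (j + 1)) y) = 0 :=
          vanish Q N he hrel e (e - 1 - j) (j + 1) x y (by omega) (by omega)
        rw [v1] at key
        have heq : polar Q ((N ^ (e - 1 - j)) x) ((N ^ j) y)
            = polar Q ((N ^ (e - 2 - j)) x) ((N ^ (j + 1)) y) := by
          have h2 := two0 (polar Q ((N ^ (e - 2 - j)) x) ((N ^ (j + 1)) y))
          linear_combination -key - h2
        rw [heq, show e - 2 - j = e - 1 - (j + 1) from by omega]
  have hfin := main (e - 1) (le_refl _)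
  rw [hfin, show e - 1 - (e - 1) = 0 from by omega, pow_zero]
  rfl

end MainAux

/-- in characteristic 2 (`k` finite or algebraically closed), for
`N ∈ 𝓜_Q`, `N ≠ 0`, `L = L_N` satisfies `L ⊆ L^⊥` and `Q|_L = 0`. -/
theorem stmt15 [Field k] [CharP k 2] (hk : Finite k ∨ IsAlgClosed k)
    [AddCommGroup V] [Module k V] [FiniteDimensional k V]
    (Q : QuadraticForm k V) (hQ : QNondeg Q) (N : Module.End k V) (hN : N ∈ Mtilde Q)
    (hMQ : Even (Module.finrank k V) → Even (Module.finrank k (LinearMap.ker N)))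
    (hN0 : N ≠ 0) (e : ℕ) (he : N ^ e = 0) (he' : N ^ (e - 1) ≠ 0) :
    LsetN Q N e ⊆ (perp Q (LsetN Q N e) : Set V) ∧ ∀ x ∈ LsetN Q N e, Q x = 0 := by
  classical
  -- basic char-2 facts
  have two0 : (2 : k) = 0 := by
    have := CharP.cast_eq_zero k 2
    exact_mod_cast this
  have haddk : ∀ a : k, a + a = 0 := CharTwo.add_self_eq_zero
  have haddV : ∀ m : V, m + m = 0 := by
    intro m
    calc m + m = (2 : k) • m := (two_smul k m).symm
      _ = 0 := by rw [two0, zero_smul]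
  have hcancel : ∀ a b : k, a + b = 0 → a = b := by
    intro a b h
    have hb := haddk b
    linear_combination h - hb
  have hcancelV : ∀ m n : V, m + n = 0 → m = n := by
    intro m n h
    have : m = m + (n + n) := by rw [haddV n, add_zero]
    rw [this, ← add_assoc, h, zero_add]
  obtain ⟨-, hQN⟩ := hN
  have he2 : 2 ≤ e := by
    by_contra hc
    push_neg at hc
    interval_cases e
    · exact he' (by simpa using he)
    · exact hN0 (by simpa using he)
  have hrel := polar_rel Q N hQN
  have hvan : ∀ (a b : ℕ) (x y : V), e ≤ a + b → polar Q ((N ^ a) x) ((N ^ b) y) = 0 :=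
    fun a b x y h => vanish Q N he hrel e a b x y h (by omega)
  have hsa := selfadj Q N he he2 hrel
  have hQpow : ∀ w : V, Q ((N ^ (e - 1)) w) = polar Q ((N ^ (e - 2)) w) ((N ^ (e - 1)) w) := by
    intro w
    have e1 : N ((N ^ (e - 2)) w) = (N ^ (e - 1)) w := by
      rw [show e - 1 = (e - 2) + 1 by omega, pow_succ']
      rfl
    have h := hQN ((N ^ (e - 2)) w)
    rw [e1, CharTwo.neg_eq] at h
    exact h
  -- square roots exist
  have hsq : ∀ a : k, ∃ c : k, c * c = a := by
    rcases hk with hfin | halg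
    · have hinj : Function.Injective (fun c : k => c * c) := by
        intro a b hab
        simp only at hab
        have h0 : (a + b) * (a + b) = 0 := by
          linear_combination hab + (a * b + b * b) * two0
        have := mul_self_eq_zero.mp h0
        exact hcancel a b this
      intro a
      exact Finite.injective_iff_surjective.mp hinj a
    · intro a
      obtain ⟨z, hz⟩ := IsAlgClosed.exists_pow_nat_eq a (n := 2) (by norm_num)
      exact ⟨z, by rw [← hz]; ring⟩
  -- additivity of λ
  have hlam : ∀ (u z : V) (c : k),
      polar Q (u + c • z) ((N ^ (e - 1)) (u + c • z)) =
        polar Q u ((N ^ (e - 1)) u) + c * c * polar Q z ((N ^ (e - 1)) z) := by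
    intro u z c
    have hcross : polar Q z ((N ^ (e - 1)) u) = polar Q u ((N ^ (e - 1)) z) := by
      rw [polar_comm]
      exact hsa u z
    rw [_root_.map_add, _root_.map_smul, polar_add_left, polar_add_right, polar_add_right,
      polar_smul_left, polar_smul_left, polar_smul_right, polar_smul_right]
    simp only [smul_eq_mul]
    linear_combination c * hcross + (c * polar Q u ((N ^ (e - 1)) z)) * two0
  by_cases hl : ∀ x : V, polar Q x ((N ^ (e - 1)) x) = 0
  · -- Case 1 : L = N^(e-1) V
    have hL : LsetN Q N e = Set.range fun x : V => (N ^ (e - 1)) x := by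
      rw [LsetN, if_pos hl]
    rw [hL]
    constructor
    · rintro x ⟨w, rfl⟩
      rw [SetLike.mem_coe, mem_perp_iff]
      rintro y ⟨u, rfl⟩
      exact hvan (e - 1) (e - 1) w u (by omega)
    · rintro x ⟨w, rfl⟩
      rw [hQpow w]
      by_cases he3 : 3 ≤ e
      · exact hvan (e - 2) (e - 1) w w (by omega)
      · rw [show e - 2 = 0 by omega, pow_zero]
        have h1 : ((1 : Module.End k V)) w = w := rfl
        rw [h1]
        exact hl w
  · -- λ is not identically 0
    push_neg at hl
    obtain ⟨z, hz⟩ := hl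
    -- membership decomposition into the kernel of λ
    have hdec : ∀ u : V, ∃ c : k,
        polar Q (u + c • z) ((N ^ (e - 1)) (u + c • z)) = 0 := by
      intro u
      obtain ⟨c, hc⟩ := hsq (polar Q u ((N ^ (e - 1)) u) / polar Q z ((N ^ (e - 1)) z))
      refine ⟨c, ?_⟩
      rw [hlam, hc, div_mul_cancel₀ _ hz, haddk]
    -- the perpendicularity statement, common to cases 2 and 3
    have hKset : ∀ x : V, x ∈ perp Q {w : V | polar Q w ((N ^ (e - 1)) w) = 0} ↔
        ∀ y : V, polar Q y ((N ^ (e - 1)) y) = 0 → polar Q x y = 0 := by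
      intro x
      rw [mem_perp_iff]
      exact ⟨fun h y hy => h y hy, fun h y hy => h y hy⟩
    have hperp2 : ∀ x ∈ perp Q {w : V | polar Q w ((N ^ (e - 1)) w) = 0},
        ∀ y ∈ perp Q {w : V | polar Q w ((N ^ (e - 1)) w) = 0}, polar Q x y = 0 := by
      intro x hx y hy
      rw [hKset] at hx hy
      have hxc : ∀ u : V, ∃ c : k,
          polar Q x u = c * polar Q x z ∧ polar Q y u = c * polar Q y z := by
        intro u
        obtain ⟨c, hcK⟩ := hdec u
        refine ⟨c, ?_, ?_⟩
        · have h0 := hx _ hcK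
          rw [polar_add_right, polar_smul_right, smul_eq_mul] at h0
          exact hcancel _ _ h0
        · have h0 := hy _ hcK
          rw [polar_add_right, polar_smul_right, smul_eq_mul] at h0
          exact hcancel _ _ h0
      obtain ⟨cy, hcy1, hcy2⟩ := hxc y
      obtain ⟨cx, hcx1, hcx2⟩ := hxc x
      have hyy : polar Q y y = 0 := by
        rw [polar_self]
        exact CharTwo.two_nsmul _
      by_cases hcy0 : cy = 0
      · rw [hcy1, hcy0, zero_mul]
      · have hyz : polar Q y z = 0 := by
          have h0 : cy * polar Q y z = 0 := by rw [← hcy2, hyy]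
          exact (mul_eq_zero.mp h0).resolve_left hcy0
        rw [polar_comm, hcx2, hyz, mul_zero]
    by_cases hr : rad Q = ⊥
    · -- Case 2
      have hL : LsetN Q N e =
          (perp Q {w : V | polar Q w ((N ^ (e - 1)) w) = 0} : Set V) := by
        rw [LsetN, if_neg (by push_neg; exact ⟨z, hz⟩), if_pos hr]
      rw [hL]
      have hnd : ∀ u : V, (∀ w, polar Q u w = 0) → u = 0 := by
        intro u hu
        have hmem : u ∈ rad Q := fun w _ => hu w
        rw [hr] at hmem
        simpa using hmem
      constructor
      · intro x hx
        rw [SetLike.mem_coe, mem_perp_iff]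
        intro y hy
        exact hperp2 x hx y hy
      · -- the hard part : Q vanishes on L
        intro x hx
        rw [SetLike.mem_coe] at hx
        -- x is in the range of N^(e-1)
        set Bb : LinearMap.BilinForm k V := polarBilin Q with hBb
        have hBbap : ∀ a b : V, Bb a b = polar Q a b := fun a b => rfl
        have hrefl : Bb.IsRefl := by
          intro a b h
          rw [hBbap] at h ⊢
          rw [polar_comm]
          exact h
        have hnd' : Bb.Nondegenerate := by
          refine ⟨fun m h => ?_, fun m h => ?_⟩
          · exact hnd m fun w => by rw [← hBbap]; exact h w
          · exact hnd m fun w => by rw [polar_comm, ← hBbap]; exact h w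
        have horth : LinearMap.BilinForm.orthogonal Bb
            (LinearMap.range (N ^ (e - 1) : Module.End k V)) =
            LinearMap.ker (N ^ (e - 1) : Module.End k V) := by
          ext u
          rw [LinearMap.BilinForm.mem_orthogonal_iff, LinearMap.mem_ker]
          constructor
          · intro h
            apply hnd
            intro w
            have h1 := h ((N ^ (e - 1)) w) ⟨w, rfl⟩
            rw [hBbap, hsa] at h1
            rw [polar_comm]
            exact h1
          · rintro h n ⟨w, rfl⟩
            rw [hBbap, hsa, h, polar_zero_right]
        have hrange_eq : LinearMap.range (N ^ (e - 1) : Module.End k V) =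
            LinearMap.BilinForm.orthogonal Bb (LinearMap.ker (N ^ (e - 1) : Module.End k V)) := by
          rw [← horth, LinearMap.BilinForm.orthogonal_orthogonal hnd' hrefl]
        have hxo : x ∈ LinearMap.BilinForm.orthogonal Bb
            (LinearMap.ker (N ^ (e - 1) : Module.End k V)) := by
          rw [LinearMap.BilinForm.mem_orthogonal_iff]
          intro n hn
          rw [LinearMap.mem_ker] at hn
          rw [hBbap]
          rw [hKset] at hx
          rw [polar_comm]
          exact hx n (by rw [hn, polar_zero_right])
        rw [← hrange_eq] at hxo
        obtain ⟨w, hw⟩ := hxo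
        by_cases he3 : 3 ≤ e
        · rw [← hw, hQpow w]
          exact hvan (e - 2) (e - 1) w w (by omega)
        · -- e = 2
          by_cases hQx : Q x = 0
          · exact hQx
          exfalso
          have hx0 : x ≠ 0 := fun h => hQx (by rw [h, map_zero])
          have key0 : Q x = polar Q w ((N ^ (e - 1)) w) := by
            rw [← hw, hQpow w, show e - 2 = 0 by omega, pow_zero]
            rfl
          have hMx : (N ^ (e - 1)) x = 0 := by
            rw [← hw, ← Module.End.mul_apply, ← pow_add]
            have hz2 : N ^ (e - 1 + (e - 1)) = 0 := by
              rw [show e - 1 + (e - 1) = (e - 2) + e by omega, pow_add, he, mul_zero]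
            rw [hz2]
            rfl
          obtain ⟨s, hs⟩ := hsq (Q x)
          have hs0 : s ≠ 0 := fun h => hQx (by rw [← hs, h, mul_zero])
          have hpxw : polar Q x w = Q x := by
            calc polar Q x w = polar Q w x := polar_comm _ _ _
              _ = polar Q w ((N ^ (e - 1)) w) := by rw [hw]
              _ = Q x := key0.symm
          have hdecw : ∀ u : V, ∃ c : k,
              polar Q x u = c * Q x ∧ c * c * Q x = polar Q u ((N ^ (e - 1)) u) := by
            intro u
            obtain ⟨c, hc⟩ := hsq (polar Q u ((N ^ (e - 1)) u) / Q x)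
            have hmem : polar Q (u + c • w) ((N ^ (e - 1)) (u + c • w)) = 0 := by
              rw [hlam, ← key0, hc, div_mul_cancel₀ _ hQx, haddk]
            refine ⟨c, ?_, ?_⟩
            · rw [hKset] at hx
              have h0 := hx _ hmem
              rw [polar_add_right, polar_smul_right, smul_eq_mul, hpxw] at h0
              exact hcancel _ _ h0
            · rw [hc, div_mul_cancel₀ _ hQx]
          set v : V := s⁻¹ • x with hv
          have hpv : ∀ u : V, polar Q v u = s⁻¹ * polar Q x u := by
            intro u
            rw [hv, polar_smul_left, smul_eq_mul]
          have hvprop : ∀ u : V, polar Q v u * polar Q v u = polar Q u ((N ^ (e - 1)) u) := by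
            intro u
            obtain ⟨c, h1, h2⟩ := hdecw u
            rw [hpv, h1, ← h2, ← hs]
            field_simp
          have hNv : (N ^ (e - 1)) v = 0 := by
            rw [hv, _root_.map_smul, hMx, smul_zero]
          -- the modified endomorphism N'
          set N' : Module.End k V :=
            (N ^ (e - 1)) + LinearMap.smulRight (polarBilin Q v) v with hN'
          have hN'ap : ∀ u : V, N' u = (N ^ (e - 1)) u + polar Q v u • v := by
            intro u
            rw [hN']
            rfl
          have hkerle : LinearMap.ker (N ^ (e - 1) : Module.End k V) ≤ LinearMap.ker N' := by
            intro u hu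
            rw [LinearMap.mem_ker] at hu ⊢
            have h1 : polar Q v u * polar Q v u = 0 := by
              rw [hvprop, hu, polar_zero_right]
            have h2 := mul_self_eq_zero.mp h1
            rw [hN'ap, hu, h2, zero_smul, add_zero]
          have hpvw : polar Q v w = s := by
            rw [hpv, hpxw, ← hs]
            field_simp
          have hwker : N' w = 0 := by
            rw [hN'ap, hw, hpvw, hv, smul_smul, mul_inv_cancel₀ hs0, one_smul]
            exact haddV x
          have hwnot : w ∉ LinearMap.ker (N ^ (e - 1) : Module.End k V) := by
            rw [LinearMap.mem_ker, hw]
            exact hx0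
          have hw0 : w ≠ 0 := by
            intro h
            apply hx0
            rw [← hw, h, map_zero]
          have hker' : LinearMap.ker N' =
              LinearMap.ker (N ^ (e - 1) : Module.End k V) ⊔ (k ∙ w) := by
            apply le_antisymm
            · intro u hu
              rw [LinearMap.mem_ker, hN'ap] at hu
              have hMu : (N ^ (e - 1)) u = polar Q v u • v := hcancelV _ _ hu
              have h1 : u + (polar Q v u * s⁻¹) • w ∈
                  LinearMap.ker (N ^ (e - 1) : Module.End k V) := by
                rw [LinearMap.mem_ker, _root_.map_add, _root_.map_smul, hw, hMu]
                have : (polar Q v u * s⁻¹) • x = polar Q v u • v := by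
                  rw [hv, smul_smul]
                rw [this]
                exact haddV _
              have hueq : u = (u + (polar Q v u * s⁻¹) • w) + (polar Q v u * s⁻¹) • w := by
                rw [add_assoc, haddV, add_zero]
              rw [hueq]
              exact Submodule.add_mem _ (Submodule.mem_sup_left h1)
                (Submodule.mem_sup_right (Submodule.mem_span_singleton.mpr ⟨_, rfl⟩))
            · rw [sup_le_iff]
              refine ⟨hkerle, ?_⟩
              rw [Submodule.span_singleton_le_iff_mem, LinearMap.mem_ker]
              exact hwker
          have hfrk : Module.finrank k (LinearMap.ker N') =
              Module.finrank k (LinearMap.ker (N ^ (e - 1) : Module.End k V)) + 1 := by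
            rw [hker']
            have hdisj : LinearMap.ker (N ^ (e - 1) : Module.End k V) ⊓ (k ∙ w) = ⊥ := by
              rw [eq_bot_iff]
              intro u hu
              rw [Submodule.mem_inf] at hu
              obtain ⟨hu1, hu2⟩ := hu
              rw [Submodule.mem_span_singleton] at hu2
              obtain ⟨c, rfl⟩ := hu2
              rcases eq_or_ne c 0 with hc | hc
              · simp [hc]
              · exfalso
                apply hwnot
                have := Submodule.smul_mem _ c⁻¹ hu1
                rwa [smul_smul, inv_mul_cancel₀ hc, one_smul] at this
            have := Submodule.finrank_sup_add_finrank_inf_eq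
              (LinearMap.ker (N ^ (e - 1) : Module.End k V)) (k ∙ w)
            rw [hdisj, finrank_bot, add_zero, finrank_span_singleton hw0] at this
            omega
          -- the alternating form associated to N'
          have hkerBb : LinearMap.ker Bb = ⊥ := by
            rw [eq_bot_iff]
            intro u hu
            rw [LinearMap.mem_ker] at hu
            rw [Submodule.mem_bot]
            exact hnd u fun w' => by rw [← hBbap, hu]; rfl
          set β1 : V →ₗ[k] V →ₗ[k] k := LinearMap.comp Bb N' with hβ1
          have halt1 : ∀ u : V, β1 u u = 0 := by
            intro u
            have h1 : β1 u u = polar Q (N' u) u := rfl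
            rw [h1, polar_comm, hN'ap, polar_add_right, polar_smul_right, smul_eq_mul]
            rw [← hvprop u]
            have hc : polar Q u v = polar Q v u := polar_comm _ _ _
            rw [hc]
            exact haddk _
          have hkerβ : LinearMap.ker β1 = LinearMap.ker N' := by
            rw [hβ1, LinearMap.ker_comp, hkerBb]
            rfl
          have heven1 := alt_rank_even k (Module.finrank k V) V (le_refl _) β1 halt1
          rw [hkerβ, hfrk] at heven1
          have halt2 : ∀ u : V, Bb u u = 0 := by
            intro u
            rw [hBbap, polar_self]
            exact CharTwo.two_nsmul _
          have heven2 := alt_rank_even k (Module.finrank k V) V (le_refl _) Bb halt2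
          rw [hkerBb, finrank_bot, Nat.sub_zero] at heven2
          have heven3 := hMQ heven2
          have hMN : (N ^ (e - 1) : Module.End k V) = N := by
            rw [show e - 1 = 1 by omega, pow_one]
          rw [hMN] at hfrk heven1
          have hle : Module.finrank k (LinearMap.ker N') ≤ Module.finrank k V :=
            Submodule.finrank_le _
          rw [hfrk] at hle
          rw [Nat.even_iff] at heven1 heven2 heven3
          omega
    · -- Case 3
      have hL : LsetN Q N e = {x : V |
          x ∈ perp Q {w : V | polar Q w ((N ^ (e - 1)) w) = 0} ∧ Q x = 0} := by
        rw [LsetN, if_neg (by push_neg; exact ⟨z, hz⟩), if_neg hr]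
      rw [hL]
      constructor
      · rintro x ⟨hx, -⟩
        rw [SetLike.mem_coe, mem_perp_iff]
        rintro y ⟨hy, -⟩
        exact hperp2 x hx y hy
      · rintro x ⟨-, hQx⟩
        exact hQx
end
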